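/- The generalized Robertson relation is tight: for any diagonal density matrix ρ = diag(λ₁,…,λ_d) with 0 < λ₁ < λ_d, the Hermitian matrices A with entries A_{ij} = a(δ_{i,d}δ_{j,1} + δ_{i,1}δ_{j,d}) and B with entries B_{ij} = b(i·δ_{i,d}δ_{j,1} + i·δ_{i,1}δ_{j,d})·(−1)^{[i<j]} chosen Hermitian (b real, off-diagonal entries ±ib) satisfy V_ρ(A)·V_ρ(B) = ((λ_d + λ₁)²/(4(λ_d − λ₁)²))·|Tr(ρ[A,B])|², for any nonzero real a, b. -/

import Mathlib

open Matrix

lemma diag_mul_std {n : Type*} [Fintype n] [DecidableEq n] (f : n → ℂ) (i j : n) (c : ℂ) :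
    Matrix.diagonal f * Matrix.single i j c = Matrix.single i j (f i * c) := by
  ext k l
  simp only [Matrix.diagonal_mul, Matrix.single, Matrix.of_apply]
  split_ifs with h
  · rcases h with ⟨rfl, rfl⟩; rfl
  · simp

lemma matA_eq {n : Type*} [Fintype n] [DecidableEq n] (z m : n) (hzm : z ≠ m) (a : ℂ) :
    (Matrix.of fun i j => if (i = m ∧ j = z) ∨ (i = z ∧ j = m) then a else 0) =
      Matrix.single m z a + Matrix.single z m a := by
  ext i j
  simp only [Matrix.of_apply, Matrix.add_apply, Matrix.single]
  aesop

lemma matB_eq {n : Type*} [Fintype n] [DecidableEq n] (z m : n) (hzm : z ≠ m) (c : ℂ) :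
    (Matrix.of fun i j => if i = z ∧ j = m then c else if i = m ∧ j = z then -c else 0) =
      Matrix.single z m c + Matrix.single m z (-c) := by
  ext i j
  simp only [Matrix.of_apply, Matrix.add_apply, Matrix.single]
  aesop


lemma std_mul_ne {n : Type*} [Fintype n] [DecidableEq n] {i j k m : n} (h : j ≠ k)
    (c e : ℂ) : Matrix.single i j c * Matrix.single k m e = 0 :=
  Matrix.single_mul_single_of_ne (c := c) i j k h e

lemma std_trace_ne {n : Type*} [Fintype n] [DecidableEq n] {i j : n} (h : j ≠ i)
    (c : ℂ) : (Matrix.single i j c).trace = 0 :=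
  Matrix.trace_single_eq_of_ne i j c h.symm


/-- Tightness of the generalized Robertson relation: the specific observables
`A = a(|d⟩⟨1| + |1⟩⟨d|)` and `B = ib(|1⟩⟨d| − |d⟩⟨1|)` attain equality. -/
theorem gen_robertson_tight {d : ℕ} (l : Fin (d + 2) → ℝ)
    (hmono : Monotone l) (hpos : 0 < l 0) (hne : l 0 < l (Fin.last (d + 1)))
    (hsum : ∑ i, l i = 1) (a b : ℝ) (ha : a ≠ 0) (hb : b ≠ 0) :
    (((Matrix.diagonal (fun i => (l i : ℂ))) *
          (Matrix.of fun i j =>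
            if (i = Fin.last (d + 1) ∧ j = 0) ∨ (i = 0 ∧ j = Fin.last (d + 1))
            then (a : ℂ) else 0) *
          (Matrix.of fun i j =>
            if (i = Fin.last (d + 1) ∧ j = 0) ∨ (i = 0 ∧ j = Fin.last (d + 1))
            then (a : ℂ) else 0)).trace.re -
        (((Matrix.diagonal (fun i => (l i : ℂ))) *
            (Matrix.of fun i j =>
              if (i = Fin.last (d + 1) ∧ j = 0) ∨ (i = 0 ∧ j = Fin.last (d + 1))
              then (a : ℂ) else 0)).trace.re) ^ 2) *
      (((Matrix.diagonal (fun i => (l i : ℂ))) *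
          (Matrix.of fun i j =>
            if i = 0 ∧ j = Fin.last (d + 1) then Complex.I * (b : ℂ)
            else if i = Fin.last (d + 1) ∧ j = 0 then -(Complex.I * (b : ℂ)) else 0) *
          (Matrix.of fun i j =>
            if i = 0 ∧ j = Fin.last (d + 1) then Complex.I * (b : ℂ)
            else if i = Fin.last (d + 1) ∧ j = 0 then -(Complex.I * (b : ℂ)) else 0)).trace.re -
        (((Matrix.diagonal (fun i => (l i : ℂ))) *
            (Matrix.of fun i j =>
              if i = 0 ∧ j = Fin.last (d + 1) then Complex.I * (b : ℂ)
              else if i = Fin.last (d + 1) ∧ j = 0 then -(Complex.I * (b : ℂ)) else 0)).trace.re) ^ 2) =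
    ((l (Fin.last (d + 1)) + l 0) ^ 2 / (4 * (l (Fin.last (d + 1)) - l 0) ^ 2)) *
      norm
        (((Matrix.diagonal (fun i => (l i : ℂ))) *
          ((Matrix.of fun i j =>
              if (i = Fin.last (d + 1) ∧ j = 0) ∨ (i = 0 ∧ j = Fin.last (d + 1))
              then (a : ℂ) else 0) *
            (Matrix.of fun i j =>
              if i = 0 ∧ j = Fin.last (d + 1) then Complex.I * (b : ℂ)
              else if i = Fin.last (d + 1) ∧ j = 0 then -(Complex.I * (b : ℂ)) else 0) -
           (Matrix.of fun i j =>
              if i = 0 ∧ j = Fin.last (d + 1) then Complex.I * (b : ℂ)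
              else if i = Fin.last (d + 1) ∧ j = 0 then -(Complex.I * (b : ℂ)) else 0) *
            (Matrix.of fun i j =>
              if (i = Fin.last (d + 1) ∧ j = 0) ∨ (i = 0 ∧ j = Fin.last (d + 1))
              then (a : ℂ) else 0))).trace) ^ 2 := by
  have hzm : (0 : Fin (d + 2)) ≠ Fin.last (d + 1) := by
    simp [Fin.ext_iff]
  rw [matA_eq 0 (Fin.last (d + 1)) hzm (a : ℂ), matB_eq 0 (Fin.last (d + 1)) hzm (Complex.I * (b : ℂ))]
  simp only [Matrix.single_mul_single_same, std_mul_ne hzm, std_mul_ne hzm.symm, add_zero, zero_add, Matrix.mul_add, Matrix.add_mul,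
    Matrix.mul_sub, diag_mul_std, Matrix.trace_add, Matrix.trace_sub,
    Matrix.trace_single_eq_same, std_trace_ne hzm, std_trace_ne hzm.symm, Matrix.mul_zero, Matrix.trace_zero]
  have key : ((l (Fin.last (d+1)) : ℂ) * ((a:ℂ) * (Complex.I * (b:ℂ))) + (l 0 : ℂ) * ((a:ℂ) * -(Complex.I * (b:ℂ))) -
      ((l 0 : ℂ) * (Complex.I * (b:ℂ) * (a:ℂ)) + (l (Fin.last (d+1)) : ℂ) * (-(Complex.I * (b:ℂ)) * (a:ℂ))))
      = Complex.I * ((2*a*b*(l (Fin.last (d+1)) - l 0) : ℝ) : ℂ) := by push_cast; ring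
  rw [key, norm_mul, Complex.norm_I, Complex.norm_real, one_mul, Real.norm_eq_abs, sq_abs]
  simp only [Complex.add_re, Complex.mul_re, Complex.mul_im, Complex.ofReal_re, Complex.ofReal_im,
    Complex.I_re, Complex.I_im, Complex.neg_re, Complex.neg_im, Complex.zero_re]
  have hd : l (Fin.last (d+1)) - l 0 ≠ 0 := sub_ne_zero.mpr hne.ne'
  field_simp
  ring
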